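/- For a permutation matrix g ∈ GL_{n+1}, membership of a matrix h in the Bruhat cell BgB is equivalent to: rank(h^{≤(p,q)}) = rank(g^{≤(p,q)}) for all 0 ≤ p,q ≤ n, where h^{≤(p,q)} denotes the lower-left corner submatrix consisting of entries h_{ij} with i ≥ p and j ≤ q, and B is the group of invertible upper triangular matrices. -/

import Mathlib

/-- The permutation matrix of `u`: entry `(i, j)` is `1` iff `i = u j`. -/
def permMat {N : ℕ} (K : Type*) [Field K] (u : Equiv.Perm (Fin N)) :
    Matrix (Fin N) (Fin N) K :=
  fun i j => if u j = i then 1 else 0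

/-- The rank of the lower-left corner submatrix `M^{≤(p,q)}` (entries `M i j` with
`i ≥ p` and `j ≤ q`). -/
noncomputable def cornerRank {N : ℕ} {K : Type*} [Field K]
    (M : Matrix (Fin N) (Fin N) K) (p q : Fin N) : ℕ :=
  (M.submatrix (fun i : {i : Fin N // p ≤ i} => (i : Fin N))
    (fun j : {j : Fin N // j ≤ q} => (j : Fin N))).rank


open Matrix Finset

variable {N : ℕ}



lemma sum_subtype_le {f : Fin N → ℂ} {p : Fin N} (hf : ∀ k, k < p → f k = 0) :
    ∑ k : {i : Fin N // p ≤ i}, f k = ∑ k : Fin N, f k := by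
  rw [← Finset.sum_subtype (Finset.univ.filter (fun k => p ≤ k))
      (fun x => by simp) f]
  exact Finset.sum_filter_of_ne (fun x _ hx => le_of_not_gt (fun hc => hx (hf x hc)))

lemma sum_subtype_ge {f : Fin N → ℂ} {q : Fin N} (hf : ∀ k, q < k → f k = 0) :
    ∑ k : {j : Fin N // j ≤ q}, f k = ∑ k : Fin N, f k := by
  rw [← Finset.sum_subtype (Finset.univ.filter (fun k => k ≤ q))
      (fun x => by simp) f]
  exact Finset.sum_filter_of_ne (fun x _ hx => le_of_not_gt (fun hc => hx (hf x hc)))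

lemma corner_mul_left (b M : Matrix (Fin N) (Fin N) ℂ) (hb : b.BlockTriangular id)
    (p q : Fin N) :
    ((b * M).submatrix (fun i : {i : Fin N // p ≤ i} => (i : Fin N))
        (fun j : {j : Fin N // j ≤ q} => (j : Fin N)))
      = (b.submatrix (fun i : {i : Fin N // p ≤ i} => (i : Fin N))
            (fun i : {i : Fin N // p ≤ i} => (i : Fin N)))
        * (M.submatrix (fun i : {i : Fin N // p ≤ i} => (i : Fin N))
            (fun j : {j : Fin N // j ≤ q} => (j : Fin N))) := by
  ext i j
  simp only [submatrix_apply, mul_apply]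
  exact (sum_subtype_le (fun k hk => by
    rw [hb (show id k < id (i : Fin N) from lt_of_lt_of_le hk i.2), zero_mul])).symm

lemma corner_mul_right (M b : Matrix (Fin N) (Fin N) ℂ) (hb : b.BlockTriangular id)
    (p q : Fin N) :
    ((M * b).submatrix (fun i : {i : Fin N // p ≤ i} => (i : Fin N))
        (fun j : {j : Fin N // j ≤ q} => (j : Fin N)))
      = (M.submatrix (fun i : {i : Fin N // p ≤ i} => (i : Fin N))
            (fun j : {j : Fin N // j ≤ q} => (j : Fin N)))
        * (b.submatrix (fun j : {j : Fin N // j ≤ q} => (j : Fin N))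
            (fun j : {j : Fin N // j ≤ q} => (j : Fin N))) := by
  ext i j
  simp only [submatrix_apply, mul_apply]
  exact (sum_subtype_ge (fun k hk => by
    rw [hb (show id (j : Fin N) < id k from lt_of_le_of_lt j.2 hk), mul_zero])).symm

lemma isUnit_det_corner_left {b : Matrix (Fin N) (Fin N) ℂ} (hb : b.BlockTriangular id)
    (hd : IsUnit b.det) (p : Fin N) :
    IsUnit (b.submatrix (fun i : {i : Fin N // p ≤ i} => (i : Fin N))
      (fun i : {i : Fin N // p ≤ i} => (i : Fin N))).det := by
  have ht : (b.submatrix (fun i : {i : Fin N // p ≤ i} => (i : Fin N))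
      (fun i : {i : Fin N // p ≤ i} => (i : Fin N))).BlockTriangular id := by
    intro i j hij
    exact hb (show id (j : Fin N) < id (i : Fin N) from hij)
  rw [Matrix.det_of_upperTriangular ht]
  rw [Matrix.det_of_upperTriangular hb] at hd
  rw [isUnit_iff_ne_zero, Finset.prod_ne_zero_iff] at hd ⊢
  exact fun i _ => hd i (Finset.mem_univ _)

lemma isUnit_det_corner_right {b : Matrix (Fin N) (Fin N) ℂ} (hb : b.BlockTriangular id)
    (hd : IsUnit b.det) (q : Fin N) :
    IsUnit (b.submatrix (fun j : {j : Fin N // j ≤ q} => (j : Fin N))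
      (fun j : {j : Fin N // j ≤ q} => (j : Fin N))).det := by
  have ht : (b.submatrix (fun j : {j : Fin N // j ≤ q} => (j : Fin N))
      (fun j : {j : Fin N // j ≤ q} => (j : Fin N))).BlockTriangular id := by
    intro i j hij
    exact hb (show id (j : Fin N) < id (i : Fin N) from hij)
  rw [Matrix.det_of_upperTriangular ht]
  rw [Matrix.det_of_upperTriangular hb] at hd
  rw [isUnit_iff_ne_zero, Finset.prod_ne_zero_iff] at hd ⊢
  exact fun i _ => hd i (Finset.mem_univ _)

lemma cornerRank_mul_left {b : Matrix (Fin N) (Fin N) ℂ} (M : Matrix (Fin N) (Fin N) ℂ)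
    (hb : b.BlockTriangular id) (hd : IsUnit b.det) (p q : Fin N) :
    cornerRank (b * M) p q = cornerRank M p q := by
  unfold cornerRank
  rw [corner_mul_left b M hb p q,
    rank_mul_eq_right_of_isUnit_det _ _ (isUnit_det_corner_left hb hd p)]

lemma cornerRank_mul_right {b : Matrix (Fin N) (Fin N) ℂ} (M : Matrix (Fin N) (Fin N) ℂ)
    (hb : b.BlockTriangular id) (hd : IsUnit b.det) (p q : Fin N) :
    cornerRank (M * b) p q = cornerRank M p q := by
  unfold cornerRank
  rw [corner_mul_right M b hb p q,
    rank_mul_eq_left_of_isUnit_det _ _ (isUnit_det_corner_right hb hd q)]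
lemma cornerRank_perm (u : Equiv.Perm (Fin N)) (p q : Fin N) :
    ((permMat ℂ u).submatrix (fun i : {i : Fin N // p ≤ i} => (i : Fin N))
      (fun j : {j : Fin N // j ≤ q} => (j : Fin N))).rank
    = Fintype.card {j : Fin N // j ≤ q ∧ p ≤ u j} := by
  set A := (permMat ℂ u).submatrix (fun i : {i : Fin N // p ≤ i} => (i : Fin N))
      (fun j : {j : Fin N // j ≤ q} => (j : Fin N)) with hA
  set d : {j : Fin N // j ≤ q} → ℂ := fun j => if p ≤ u j then 1 else 0 with hd
  have h1 : Aᵀ * A = diagonal d := by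
    ext j l
    simp only [mul_apply, transpose_apply, hA, submatrix_apply, permMat]
    by_cases hjl : j = l
    · subst hjl
      by_cases hp : p ≤ u (j : Fin N)
      · rw [Finset.sum_eq_single (⟨u (j : Fin N), hp⟩ : {i : Fin N // p ≤ i})]
        · simp [hd, hp]
        · intro b _ hb
          have : ¬ (u (j : Fin N) = (b : Fin N)) := by
            intro hc; exact hb (Subtype.ext hc.symm)
          simp [this]
        · simp
      · rw [Matrix.diagonal_apply_eq]
        rw [Finset.sum_eq_zero]
        · simp [hd, hp]
        · intro i _
          have : ¬ (u (j : Fin N) = (i : Fin N)) := by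
            intro hc; exact hp (hc ▸ i.2)
          simp [this]
    · rw [Matrix.diagonal_apply_ne _ hjl]
      apply Finset.sum_eq_zero
      intro i _
      by_cases h1 : u (j : Fin N) = (i : Fin N)
      · have : ¬ (u (l : Fin N) = (i : Fin N)) := by
          intro h2
          exact hjl (Subtype.ext (u.injective (h1.trans h2.symm)))
        simp [this]
      · simp [h1]
  have h2 : A * diagonal d = A := by
    ext i l
    rw [mul_apply, Finset.sum_eq_single l]
    · by_cases hp : p ≤ u (l : Fin N)
      · simp [diagonal, hd, hp]
      · have : A i l = 0 := by
          simp only [hA, submatrix_apply, permMat, ite_eq_right_iff]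
          intro hc
          exact absurd (hc ▸ i.2) hp
        simp [this, diagonal, hd, hp]
    · intro b _ hb; simp [diagonal, hb]
    · simp
  have le1 : A.rank ≤ (diagonal d).rank := by
    calc A.rank = (A * diagonal d).rank := by rw [h2]
    _ ≤ (diagonal d).rank := rank_mul_le_right _ _
  have le2 : (diagonal d).rank ≤ A.rank := by
    calc (diagonal d).rank = (Aᵀ * A).rank := by rw [h1]
    _ ≤ A.rank := rank_mul_le_right _ _
  have : A.rank = Fintype.card {j : {j : Fin N // j ≤ q} // d j ≠ 0} := by
    rw [le_antisymm le1 le2, Matrix.rank_diagonal]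
  rw [this]
  apply Fintype.card_congr
  refine Equiv.trans (Equiv.subtypeEquivRight (p := fun j : {j : Fin N // j ≤ q} => d j ≠ 0) (q := fun j : {j : Fin N // j ≤ q} => p ≤ u (j : Fin N)) ?_)
    (Equiv.subtypeSubtypeEquivSubtypeInter (fun j : Fin N => j ≤ q) (fun j => p ≤ u j))
  intro j
  simp [hd, ite_eq_right_iff]

lemma perm_eq_of_counts (u u' : Equiv.Perm (Fin N))
    (hc : ∀ p q : Fin N, Fintype.card {j : Fin N // j ≤ q ∧ p ≤ u j}
        = Fintype.card {j : Fin N // j ≤ q ∧ p ≤ u' j}) : u = u' := by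
  have hc' : ∀ (a : ℕ) (q : Fin N),
      (univ.filter (fun j => j ≤ q ∧ a ≤ ((u j : Fin N) : ℕ))).card
        = (univ.filter (fun j => j ≤ q ∧ a ≤ ((u' j : Fin N) : ℕ))).card := by
    intro a q
    by_cases ha : a < N
    · have h := hc ⟨a, ha⟩ q
      rw [Fintype.card_subtype, Fintype.card_subtype] at h
      have e1 : ∀ (v : Equiv.Perm (Fin N)), (univ.filter (fun j => j ≤ q ∧ (⟨a, ha⟩ : Fin N) ≤ v j))
          = (univ.filter (fun j => j ≤ q ∧ a ≤ ((v j : Fin N) : ℕ))) := by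
        intro v
        apply Finset.filter_congr
        intro j _
        exact Iff.rfl
      rw [e1 u, e1 u'] at h
      exact h
    · have h0 : ∀ (v : Equiv.Perm (Fin N)),
          (univ.filter (fun j => j ≤ q ∧ a ≤ ((v j : Fin N) : ℕ))).card = 0 := by
        intro v
        rw [Finset.card_eq_zero, Finset.filter_eq_empty_iff]
        intro j _
        rintro ⟨-, hle⟩
        exact absurd (lt_of_lt_of_le (v j).2 (le_of_not_gt ha)) (not_lt.2 hle)
      rw [h0 u, h0 u']
  have single : ∀ (v : Equiv.Perm (Fin N)) (a : ℕ) (q : Fin N),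
      (univ.filter (fun j => j ≤ q ∧ a ≤ ((v j : Fin N) : ℕ))).card
        = (univ.filter (fun j => j ≤ q ∧ a + 1 ≤ ((v j : Fin N) : ℕ))).card
          + (univ.filter (fun j => j ≤ q ∧ ((v j : Fin N) : ℕ) = a)).card := by
    intro v a q
    have hsplit : (univ.filter (fun j => j ≤ q ∧ a ≤ ((v j : Fin N) : ℕ)))
        = (univ.filter (fun j => (j ≤ q ∧ a + 1 ≤ ((v j : Fin N) : ℕ)) ∨
            (j ≤ q ∧ ((v j : Fin N) : ℕ) = a))) := by
      apply Finset.filter_congr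
      intro j _
      constructor
      · rintro ⟨h1, h2⟩
        rcases Nat.lt_or_ge a ((v j : Fin N) : ℕ) with h | h
        · exact Or.inl ⟨h1, h⟩
        · exact Or.inr ⟨h1, le_antisymm h (by omega)⟩
      · rintro (⟨h1, h2⟩ | ⟨h1, h2⟩)
        · exact ⟨h1, by omega⟩
        · exact ⟨h1, by omega⟩
    rw [hsplit, Finset.filter_or, Finset.card_union_of_disjoint]
    rw [Finset.disjoint_filter]
    rintro j _ ⟨-, h2⟩ ⟨-, h3⟩
    omega
  have heq : ∀ (a : ℕ) (q : Fin N),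
      (univ.filter (fun j => j ≤ q ∧ ((u j : Fin N) : ℕ) = a)).card
        = (univ.filter (fun j => j ≤ q ∧ ((u' j : Fin N) : ℕ) = a)).card := by
    intro a q
    have h1 := single u a q
    have h2 := single u' a q
    have h3 := hc' a q
    have h4 := hc' (a+1) q
    omega
  have key : ∀ m : ℕ, ∀ j : Fin N, (j : ℕ) = m → u j = u' j := by
    intro m
    induction m using Nat.strong_induction_on with
    | _ m ih =>
      intro j hj
      have hmem : j ∈ univ.filter (fun k => k ≤ j ∧ ((u k : Fin N) : ℕ) = ((u j : Fin N) : ℕ)) := by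
        simp
      have hpos : 0 < (univ.filter (fun k => k ≤ j ∧ ((u' k : Fin N) : ℕ) = ((u j : Fin N) : ℕ))).card := by
        rw [← heq]
        exact Finset.card_pos.2 ⟨j, hmem⟩
      obtain ⟨k, hk⟩ := Finset.card_pos.1 hpos
      simp only [Finset.mem_filter, Finset.mem_univ, true_and] at hk
      obtain ⟨hkj, hval⟩ := hk
      rcases lt_or_eq_of_le hkj with hlt | heq'
      · exfalso
        have hkm : (k : ℕ) < m := by
          have : (k : ℕ) < (j : ℕ) := hlt
          omega
        have h5 : u k = u' k := ih (k : ℕ) hkm k rfl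
        have h6 : u k = u j := by
          rw [h5]; exact Fin.ext hval
        exact absurd (u.injective h6) (Fin.ne_of_lt hlt)
      · subst heq'
        exact (Fin.ext hval).symm
  exact Equiv.ext (fun j => key (j : ℕ) j rfl)

def Reduced (M : Matrix (Fin N) (Fin N) ℂ) (j : ℕ) : Prop :=
  ∀ k : Fin N, (k : ℕ) < j →
    ∃ i, M i k = 1 ∧ (∀ i', M i' k ≠ 0 → i' = i) ∧ (∀ l, l ≠ k → M i l = 0)

lemma reduce_step {M : Matrix (Fin N) (Fin N) ℂ} (hMdet : IsUnit M.det) {j : ℕ}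
    (hjN : j < N) (hred : Reduced M j) :
    ∃ L R : Matrix (Fin N) (Fin N) ℂ,
      L.BlockTriangular id ∧ R.BlockTriangular id ∧ IsUnit L.det ∧ IsUnit R.det ∧
      IsUnit (L * M * R).det ∧ Reduced (L * M * R) (j + 1) ∧
      ∃ L' R' : Matrix (Fin N) (Fin N) ℂ,
        L'.BlockTriangular id ∧ R'.BlockTriangular id ∧
        L' * L = 1 ∧ R * R' = 1 := by
  set jf : Fin N := ⟨j, hjN⟩ with hjf
  have hcol : ∃ i, M i jf ≠ 0 := by
    by_contra hc
    push_neg at hc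
    exact hMdet.ne_zero (Matrix.det_eq_zero_of_column_eq_zero jf hc)
  set s : Finset (Fin N) := univ.filter (fun i => M i jf ≠ 0) with hs
  have hsne : s.Nonempty := by
    obtain ⟨i, hi⟩ := hcol
    exact ⟨i, by simp [hs, hi]⟩
  set i₀ : Fin N := s.max' hsne with hi₀def
  have hi₀ : M i₀ jf ≠ 0 := by
    have hmem : i₀ ∈ s := s.max'_mem hsne
    rw [hs, Finset.mem_filter] at hmem
    exact hmem.2
  have hmax : ∀ i, i₀ < i → M i jf = 0 := by
    intro i hi
    by_contra hne
    exact absurd (s.le_max' i (by simp [hs, hne])) (not_le.2 hi)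
  set c : ℂ := M i₀ jf with hc
  have hrow : ∀ k : Fin N, (k : ℕ) < j → M i₀ k = 0 := by
    intro k hk
    obtain ⟨ik, hik1, hik2, hik3⟩ := hred k hk
    by_contra hne
    have h1 : i₀ = ik := hik2 i₀ hne
    have h2 : M ik jf = 0 := hik3 jf (by
      intro hcon
      have : j = (k : ℕ) := congrArg Fin.val hcon
      omega)
    rw [← h1] at h2
    exact hi₀ h2
  set E : Matrix (Fin N) (Fin N) ℂ :=
    fun a b => if b = i₀ ∧ a < i₀ then -(M a jf) / c else 0 with hE
  set F : Matrix (Fin N) (Fin N) ℂ :=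
    fun a b => if a = jf ∧ jf < b then -(M i₀ b) / c else 0 with hF
  set D : Matrix (Fin N) (Fin N) ℂ := diagonal (fun a => if a = jf then c⁻¹ else 1) with hD
  set D' : Matrix (Fin N) (Fin N) ℂ := diagonal (fun a => if a = jf then c else 1) with hD'
  have hE2 : E * E = 0 := by
    ext a b
    rw [Matrix.mul_apply]
    rw [show (0 : Matrix (Fin N) (Fin N) ℂ) a b = 0 from rfl]
    apply Finset.sum_eq_zero
    intro k _
    by_cases h1 : k = i₀ ∧ a < i₀
    · have h2 : ¬ (b = i₀ ∧ k < i₀) := by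
        rintro ⟨-, hlt⟩
        rw [h1.1] at hlt
        exact lt_irrefl _ hlt
      simp [hE, h2]
    · simp [hE, h1]
  have hF2 : F * F = 0 := by
    ext a b
    rw [Matrix.mul_apply]
    rw [show (0 : Matrix (Fin N) (Fin N) ℂ) a b = 0 from rfl]
    apply Finset.sum_eq_zero
    intro k _
    by_cases h1 : a = jf ∧ jf < k
    · have h2 : ¬ (k = jf ∧ jf < b) := by
        rintro ⟨hk, -⟩
        rw [hk] at h1
        exact lt_irrefl _ h1.2
      simp [hF, h2]
    · simp [hF, h1]
  have hUU' : (1 - E) * (1 + E) = 1 := by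
    rw [sub_mul, one_mul, mul_add, mul_one, hE2, add_zero]; abel
  have hU'U : (1 + E) * (1 - E) = 1 := by
    rw [mul_sub, mul_one, add_mul, one_mul, hE2, add_zero]; abel
  have hVV' : (1 + F) * (1 - F) = 1 := by
    rw [mul_sub, mul_one, add_mul, one_mul, hF2, add_zero]; abel
  have hDD' : D * D' = 1 := by
    rw [hD, hD', diagonal_mul_diagonal]
    ext a b
    by_cases hab : a = b
    · subst hab
      by_cases ha : a = jf <;>
        simp [ha, Matrix.diagonal_apply_eq, Matrix.one_apply, inv_mul_cancel₀ hi₀]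
    · simp [Matrix.diagonal_apply_ne _ hab, Matrix.one_apply, hab]
  have hEt : E.BlockTriangular id := by
    intro a b hab
    have h1 : ¬ (b = i₀ ∧ a < i₀) := by
      rintro ⟨hb, hlt⟩
      rw [hb] at hab
      exact absurd hab (not_lt.2 (le_of_lt hlt))
    simp [hE, h1]
  have hFt : F.BlockTriangular id := by
    intro a b hab
    have h1 : ¬ (a = jf ∧ jf < b) := by
      rintro ⟨ha, hlt⟩
      rw [ha] at hab
      exact absurd hab (not_lt.2 (le_of_lt hlt))
    simp [hF, h1]
  have hUt : (1 + E).BlockTriangular id := Matrix.blockTriangular_one.add hEt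
  have hU't : (1 - E).BlockTriangular id := Matrix.blockTriangular_one.sub hEt
  have hVt : (1 + F).BlockTriangular id := Matrix.blockTriangular_one.add hFt
  have hV't : (1 - F).BlockTriangular id := Matrix.blockTriangular_one.sub hFt
  have hDt : D.BlockTriangular id := Matrix.blockTriangular_diagonal _
  have hD't : D'.BlockTriangular id := Matrix.blockTriangular_diagonal _
  have hUdet : IsUnit (1 + E).det := by
    apply IsUnit.of_mul_eq_one (1 - E).det
    rw [← Matrix.det_mul, hU'U, Matrix.det_one]
  have hVdet : IsUnit (1 + F).det := by
    apply IsUnit.of_mul_eq_one (1 - F).det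
    rw [← Matrix.det_mul, hVV', Matrix.det_one]
  have hDdet : IsUnit D.det := by
    apply IsUnit.of_mul_eq_one D'.det
    rw [← Matrix.det_mul, hDD', Matrix.det_one]
  set M₁ : Matrix (Fin N) (Fin N) ℂ := M * (1 + F) with hM₁
  set M₂ : Matrix (Fin N) (Fin N) ℂ := (1 + E) * M₁ with hM₂
  set M₃ : Matrix (Fin N) (Fin N) ℂ := M₂ * D with hM₃
  have eM₁ : ∀ a b, M₁ a b = M a b + M a jf * F jf b := by
    intro a b
    rw [hM₁, mul_add, mul_one, Matrix.add_apply, Matrix.mul_apply]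
    congr 1
    rw [Finset.sum_eq_single jf]
    · intro k _ hk
      have h1 : ¬ (k = jf ∧ jf < b) := fun hcon => hk hcon.1
      simp [hF, h1]
    · intro habs
      exact absurd (Finset.mem_univ jf) habs
  have eM₂ : ∀ a b, M₂ a b = M₁ a b + E a i₀ * M₁ i₀ b := by
    intro a b
    rw [hM₂, add_mul, one_mul, Matrix.add_apply, Matrix.mul_apply]
    congr 1
    rw [Finset.sum_eq_single i₀]
    · intro k _ hk
      have h1 : ¬ (k = i₀ ∧ a < i₀) := fun hcon => hk hcon.1
      simp [hE, h1]
    · intro habs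
      exact absurd (Finset.mem_univ i₀) habs
  have eM₃ : ∀ a b, M₃ a b = M₂ a b * (if b = jf then c⁻¹ else 1) := by
    intro a b
    rw [hM₃, hD, Matrix.mul_diagonal]
  have colM₁jf : ∀ a, M₁ a jf = M a jf := by
    intro a
    rw [eM₁]
    have h1 : ¬ (jf = jf ∧ jf < jf) := fun hcon => lt_irrefl _ hcon.2
    simp [hF, h1]
  have colM₂jf : ∀ a, M₂ a jf = (if a = i₀ then c else 0) := by
    intro a
    rw [eM₂, colM₁jf, colM₁jf]
    rcases lt_trichotomy a i₀ with hlt | heq | hgt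
    · rw [if_neg (Fin.ne_of_lt hlt)]
      have h1 : E a i₀ = -(M a jf) / c := by simp [hE, hlt]
      rw [h1, ← hc]
      field_simp; ring
    · rw [heq, if_pos rfl]
      have h1 : E i₀ i₀ = 0 := by simp [hE]
      rw [h1, ← hc]
      ring
    · rw [if_neg (Fin.ne_of_gt hgt)]
      have h1 : E a i₀ = 0 := by
        have h2 : ¬ (i₀ = i₀ ∧ a < i₀) := fun hcon => absurd hcon.2 (not_lt.2 (le_of_lt hgt))
        exact if_neg h2
      rw [h1, hmax a hgt]
      ring
  refine ⟨1 + E, (1 + F) * D, hUt, hVt.mul hDt, hUdet, ?_, ?_, ?_, ?_⟩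
  · rw [Matrix.det_mul]
    exact hVdet.mul hDdet
  · rw [Matrix.det_mul, Matrix.det_mul, Matrix.det_mul]
    exact (hUdet.mul hMdet).mul (hVdet.mul hDdet)
  · have hrw : (1 + E) * M * ((1 + F) * D) = M₃ := by
      rw [hM₃, hM₂, hM₁]
      simp only [Matrix.mul_assoc]
    rw [hrw]
    intro k hk
    by_cases hkj : (k : ℕ) < j
    · obtain ⟨ik, hik1, hik2, hik3⟩ := hred k hkj
      have hkjf : k ≠ jf := by
        intro hcon
        have : (k : ℕ) = j := congrArg Fin.val hcon
        omega
      have hF0 : F jf k = 0 := by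
        have h1 : ¬ (jf = jf ∧ jf < k) := by
          rintro ⟨-, hlt⟩
          have : j < (k : ℕ) := hlt
          omega
        exact if_neg h1
      have colk : ∀ a, M₃ a k = M a k := by
        intro a
        have e1 : ∀ a', M₁ a' k = M a' k := fun a' => by rw [eM₁, hF0, mul_zero, add_zero]
        rw [eM₃, if_neg hkjf, mul_one, eM₂, e1, e1, hrow k hkj, mul_zero, add_zero]
      have hMikjf : M ik jf = 0 := hik3 jf (fun hcon => hkjf hcon.symm)
      have hEik : E ik i₀ = 0 := by
        by_cases h1 : i₀ = i₀ ∧ ik < i₀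
        · show (if i₀ = i₀ ∧ ik < i₀ then -(M ik jf) / c else 0) = 0
          rw [if_pos h1, hMikjf, neg_zero, zero_div]
        · exact if_neg h1
      refine ⟨ik, by rw [colk]; exact hik1,
        fun i' hi' => hik2 i' (by rw [← colk i']; exact hi'), ?_⟩
      intro l hl
      have hM₁l : M₁ ik l = 0 := by
        rw [eM₁, hik3 l hl, hMikjf, zero_mul, add_zero]
      have hM₁jfl : M₂ ik l = 0 := by
        rw [eM₂, hM₁l, hEik, zero_mul, add_zero]
      rw [eM₃, hM₁jfl, zero_mul]
    · have hkeq : k = jf := by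
        apply Fin.ext
        show (k : ℕ) = j
        omega
      subst hkeq
      refine ⟨i₀, ?_, ?_, ?_⟩
      · rw [eM₃, if_pos rfl, colM₂jf, if_pos rfl, mul_inv_cancel₀ hi₀]
      · intro i' hi'
        by_contra hne
        rw [eM₃, if_pos rfl, colM₂jf, if_neg hne, zero_mul] at hi'
        exact hi' rfl
      · intro l hl
        have hE0 : E i₀ i₀ = 0 := by simp [hE]
        rw [eM₃, if_neg hl, mul_one, eM₂, hE0, zero_mul, add_zero, eM₁]
        rcases lt_trichotomy l jf with hlt | heq | hgt
        · have hlj : (l : ℕ) < j := hlt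
          have hF0 : F jf l = 0 := by
            have h1 : ¬ ((jf : Fin N) = jf ∧ jf < l) := by
              rintro ⟨-, hlt2⟩
              exact absurd hlt2 (not_lt.2 (le_of_lt hlt))
            exact if_neg h1
          rw [hrow l hlj, hF0, mul_zero, add_zero]
        · exact absurd heq hl
        · have hF0 : F jf l = -(M i₀ l) / c := if_pos ⟨rfl, hgt⟩
          rw [hF0, ← hc]
          field_simp
          ring
  · exact ⟨1 - E, D' * (1 - F), hU't, hD't.mul hV't, hUU', by
      rw [Matrix.mul_assoc, ← Matrix.mul_assoc D D' (1 - F), hDD', Matrix.one_mul, hVV']⟩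

lemma reduce_all (h : Matrix (Fin N) (Fin N) ℂ) (hdet : IsUnit h.det) :
    ∀ j : ℕ, j ≤ N → ∃ b₁ b₂ M : Matrix (Fin N) (Fin N) ℂ,
      b₁.BlockTriangular id ∧ b₂.BlockTriangular id ∧ IsUnit b₁.det ∧ IsUnit b₂.det ∧
      h = b₁ * M * b₂ ∧ IsUnit M.det ∧ Reduced M j := by
  intro j
  induction j with
  | zero =>
    intro _
    refine ⟨1, 1, h, Matrix.blockTriangular_one, Matrix.blockTriangular_one, by simp, by simp,
      by simp, hdet, ?_⟩
    intro k hk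
    exact absurd hk (Nat.not_lt_zero _)
  | succ j ih =>
    intro hjN
    obtain ⟨b₁, b₂, M, ht1, ht2, hd1, hd2, hfac, hMdet, hred⟩ := ih (Nat.le_of_succ_le hjN)
    obtain ⟨L, R, hLt, hRt, hLd, hRd, hNewDet, hredNew, L', R', hL't, hR't, hLL, hRR⟩ :=
      reduce_step hMdet (Nat.lt_of_succ_le hjN) hred
    refine ⟨b₁ * L', R' * b₂, L * M * R, ht1.mul hL't, hR't.mul ht2, ?_, ?_, ?_, hNewDet, hredNew⟩
    · rw [Matrix.det_mul]
      exact hd1.mul (IsUnit.of_mul_eq_one L.det (by rw [← Matrix.det_mul, hLL, Matrix.det_one]))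
    · rw [Matrix.det_mul]
      refine (IsUnit.of_mul_eq_one R.det ?_).mul hd2
      have h2 : R.det * R'.det = 1 := by rw [← Matrix.det_mul, hRR, Matrix.det_one]
      rw [mul_comm] at h2
      exact h2
    · have h1 : L' * (L * M * R) * R' = M := by
        calc L' * (L * M * R) * R' = (L' * L) * M * (R * R') := by simp only [Matrix.mul_assoc]
        _ = M := by rw [hLL, hRR, Matrix.one_mul, Matrix.mul_one]
      calc h = b₁ * M * b₂ := hfac
      _ = b₁ * (L' * (L * M * R) * R') * b₂ := by rw [h1]
      _ = b₁ * L' * (L * M * R) * (R' * b₂) := by simp only [Matrix.mul_assoc]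

lemma reduced_is_perm (M : Matrix (Fin N) (Fin N) ℂ) (hred : Reduced M N) :
    ∃ u : Equiv.Perm (Fin N), M = permMat ℂ u := by
  choose g h1 h2 h3 using fun k : Fin N => hred k k.isLt
  have ginj : Function.Injective g := by
    intro k k' hkk'
    by_contra hne
    have hz : M (g k) k' = 0 := h3 k k' (Ne.symm hne)
    rw [hkk'] at hz
    exact one_ne_zero ((h1 k').symm.trans hz)
  refine ⟨Equiv.ofBijective g (Finite.injective_iff_bijective.1 ginj), ?_⟩
  ext i k
  show M i k = if g k = i then 1 else 0
  by_cases hik : g k = i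
  · rw [if_pos hik, ← hik]
    exact h1 k
  · rw [if_neg hik]
    by_contra hne
    exact hik ((h2 k i hne).symm)


lemma permMat_mul_inv (u : Equiv.Perm (Fin N)) : permMat ℂ u * permMat ℂ u⁻¹ = 1 := by
  ext i j
  rw [Matrix.mul_apply, Finset.sum_eq_single (u⁻¹ j)]
  · simp [permMat, Matrix.one_apply, eq_comm]
  · intro k _ hk
    have : ¬ (u⁻¹ j = k) := fun hcon => hk hcon.symm
    simp only [permMat]; rw [if_neg this, mul_zero]
  · intro habs
    exact absurd (Finset.mem_univ _) habs

lemma isUnit_det_of_rank (A : Matrix (Fin N) (Fin N) ℂ) (hr : A.rank = N) : IsUnit A.det := by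
  rw [← Matrix.isUnit_iff_isUnit_det, ← Matrix.mulVec_surjective_iff_isUnit]
  have htop : LinearMap.range A.mulVecLin = ⊤ := by
    apply Submodule.eq_top_of_finrank_eq
    have : Module.finrank ℂ (Fin N → ℂ) = N := by
      rw [Module.finrank_fintype_fun_eq_card, Fintype.card_fin]
    rw [this]
    exact hr
  intro v
  obtain ⟨w, hw⟩ := (LinearMap.range_eq_top.1 htop) v
  exact ⟨w, hw⟩

lemma rank_reindex' {S T : Type*} [Fintype S] [Fintype T]
    (e₁ : Fin N ≃ S) (e₂ : Fin N ≃ T) (A : Matrix (Fin N) (Fin N) ℂ) :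
    (Matrix.reindex e₁ e₂ A).rank = A.rank := by
  rw [Matrix.rank, Matrix.rank, Matrix.mulVecLin_reindex, LinearMap.range_comp,
    LinearMap.range_comp, LinearEquiv.range, Submodule.map_top, LinearEquiv.finrank_map_eq]

lemma cornerRank_zero_last (n : ℕ) (A : Matrix (Fin (n + 1)) (Fin (n + 1)) ℂ) :
    cornerRank A 0 (Fin.last n) = A.rank := by
  unfold cornerRank
  have h1 := rank_reindex'
    (Equiv.subtypeUnivEquiv (fun i : Fin (n + 1) => Fin.zero_le i) :
      {i : Fin (n + 1) // (0 : Fin (n + 1)) ≤ i} ≃ Fin (n + 1)).symm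
    (Equiv.subtypeUnivEquiv (fun j : Fin (n + 1) => Fin.le_last j) :
      {j : Fin (n + 1) // j ≤ Fin.last n} ≃ Fin (n + 1)).symm A
  rw [Matrix.reindex_apply, Equiv.symm_symm, Equiv.symm_symm] at h1
  exact h1

lemma cornerRank_perm' {N : ℕ} (u : Equiv.Perm (Fin N)) (p q : Fin N) :
    cornerRank (permMat ℂ u) p q = Fintype.card {j : Fin N // j ≤ q ∧ p ≤ u j} :=
  cornerRank_perm u p q

/-- for a permutation matrix `g` of `u ∈ S_{n+1}`, a matrix `h` lies in the
Bruhat cell `B g B` (with `B` the invertible upper triangular matrices) iff all the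
lower-left corner ranks of `h` equal those of `g`. -/
theorem bruhat_cell_iff_corner_ranks (n : ℕ) (u : Equiv.Perm (Fin (n + 1)))
    (h : Matrix (Fin (n + 1)) (Fin (n + 1)) ℂ) :
    (∃ b₁ b₂ : Matrix (Fin (n + 1)) (Fin (n + 1)) ℂ,
        IsUnit b₁.det ∧ IsUnit b₂.det ∧
        b₁.BlockTriangular id ∧ b₂.BlockTriangular id ∧
        h = b₁ * permMat ℂ u * b₂) ↔
      ∀ p q : Fin (n + 1), cornerRank h p q = cornerRank (permMat ℂ u) p q := by
  constructor
  · rintro ⟨b₁, b₂, hd1, hd2, ht1, ht2, rfl⟩ p q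
    rw [cornerRank_mul_right _ ht2 hd2, cornerRank_mul_left _ ht1 hd1]
  · intro hcr
    have hperm_unit : IsUnit (permMat ℂ u).det :=
      Matrix.isUnit_det_of_right_inverse (permMat_mul_inv u)
    have hrank : h.rank = n + 1 := by
      have h0 := hcr 0 (Fin.last n)
      rw [cornerRank_zero_last, cornerRank_zero_last] at h0
      rw [h0, Matrix.rank_of_isUnit _ ((Matrix.isUnit_iff_isUnit_det _).2 hperm_unit),
        Fintype.card_fin]
    have hdet : IsUnit h.det := isUnit_det_of_rank h hrank
    obtain ⟨b₁, b₂, M, ht1, ht2, hd1, hd2, hfac, hMdet, hred⟩ :=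
      reduce_all h hdet (n + 1) le_rfl
    obtain ⟨u', rfl⟩ := reduced_is_perm M hred
    have hcr' : ∀ p q, cornerRank h p q = cornerRank (permMat ℂ u') p q := by
      intro p q
      rw [hfac, cornerRank_mul_right _ ht2 hd2, cornerRank_mul_left _ ht1 hd1]
    have hueq : u' = u := by
      apply perm_eq_of_counts
      intro p q
      rw [← cornerRank_perm' u' p q, ← cornerRank_perm' u p q, ← hcr' p q, hcr p q]
    rw [hueq] at hfac
    exact ⟨b₁, b₂, hd1, hd2, ht1, ht2, hfac⟩
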